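/- Let T > 0, H > 0, let (λ_k)_{k∈ℕ} be real numbers with |λ_k| ≤ C·k^(−(H+1/2)) for all k ≥ 1 and some C > 0, and let (e_k)_{k∈ℕ} be continuous functions ℝ → ℝ that are uniformly bounded (sup_k sup_x |e_k(x)| ≤ M for some M > 0) and uniformly L-Lipschitz (|e_k(x) − e_k(y)| ≤ L·|x − y| for all k, x, y and some L > 0). Let (Z_k)_{k∈ℕ} be a sequence of independent standard Gaussian random variables on a probability space (Ω, ℱ, P). Then for P-almost every ω, the partial sums S_N(t)(ω) := Σ_{k=0}^N λ_k·e_k(kπt/T)·Z_k(ω) converge uniformly on [0,T] as N → ∞ (in particular, the limit is a continuous function of t). -/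

import Mathlib

open MeasureTheory Real Filter Set ProbabilityTheory
open scoped ENNReal NNReal


lemma key_gauss_pdf (u x : ℝ) : Real.exp (u * x) * gaussianPDFReal 0 1 x
    = Real.exp (u ^ 2 / 2) * gaussianPDFReal u 1 x := by
  simp only [gaussianPDFReal, NNReal.coe_one]
  have h2 : ∀ a b : ℝ, Real.exp a * ((Real.sqrt (2*π*1))⁻¹ * Real.exp b)
      = (Real.sqrt (2*π*1))⁻¹ * Real.exp (a+b) := by
    intro a b; rw [Real.exp_add]; ring
  rw [h2, h2]
  congr 1
  ring

lemma mgf_std_gaussian {Ω : Type*} [MeasurableSpace Ω] (P : Measure Ω)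
    (X : Ω → ℝ) (hX : Measurable X) (h : P.map X = gaussianReal 0 1) (u : ℝ) :
    mgf X P u = Real.exp (u ^ 2 / 2) := by
  have h1 : mgf X P u = ∫ x, Real.exp (u * x) ∂(gaussianReal 0 1) := by
    rw [mgf, ← h, integral_map hX.aemeasurable]
    exact (measurable_const_mul u).exp.aestronglyMeasurable
  have hd : gaussianPDF 0 1 = fun x => ((Real.toNNReal (gaussianPDFReal 0 1 x) : ℝ≥0) : ℝ≥0∞) :=
    rfl
  rw [h1, gaussianReal_of_var_ne_zero 0 one_ne_zero, hd,
    integral_withDensity_eq_integral_smul (measurable_gaussianPDFReal 0 1).real_toNNReal]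
  have : ∀ x : ℝ, (Real.toNNReal (gaussianPDFReal 0 1 x)) • Real.exp (u * x)
      = Real.exp (u ^ 2 / 2) * gaussianPDFReal u 1 x := by
    intro x
    rw [NNReal.smul_def, smul_eq_mul, Real.coe_toNNReal _ (gaussianPDFReal_nonneg 0 1 x),
      mul_comm, key_gauss_pdf]
  rw [MeasureTheory.integral_congr_ae (Filter.Eventually.of_forall this),
    MeasureTheory.integral_const_mul, integral_gaussianPDFReal_eq_one u one_ne_zero, mul_one]

lemma integrable_exp_mul_std_gaussian {Ω : Type*} [MeasurableSpace Ω] (P : Measure Ω)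
    (X : Ω → ℝ) (hX : Measurable X) (h : P.map X = gaussianReal 0 1) (u : ℝ) :
    Integrable (fun ω => Real.exp (u * X ω)) P := by
  have h2 : Integrable (fun x => Real.exp (u * x)) (gaussianReal 0 1) := by
    rw [gaussianReal_of_var_ne_zero 0 one_ne_zero,
      integrable_withDensity_iff (measurable_gaussianPDF 0 1)
        (Filter.Eventually.of_forall fun x => ENNReal.ofReal_lt_top)]
    have h3 := (integrable_gaussianPDFReal u 1).const_mul (Real.exp (u ^ 2 / 2))
    refine h3.congr (Filter.Eventually.of_forall fun x => ?_)
    show Real.exp (u ^ 2 / 2) * gaussianPDFReal u 1 x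
      = Real.exp (u * x) * (gaussianPDF 0 1 x).toReal
    rw [← key_gauss_pdf]
    simp only [gaussianPDF, ENNReal.toReal_ofReal (gaussianPDFReal_nonneg 0 1 x)]
  have h3 : Integrable ((fun x => Real.exp (u * x)) ∘ X) P := by
    rw [← integrable_map_measure (μ := P)
      ((measurable_const_mul u).exp.aestronglyMeasurable) hX.aemeasurable, h]
    exact h2
  exact h3

lemma gauss_sum_tail {Ω : Type*} [MeasurableSpace Ω] (P : Measure Ω) [IsProbabilityMeasure P]
    (Z : ℕ → Ω → ℝ) (hZmeas : ∀ k, Measurable (Z k))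
    (hZindep : iIndepFun Z P)
    (hZlaw : ∀ k, P.map (Z k) = gaussianReal 0 1)
    (s : Finset ℕ) (c : ℕ → ℝ) (v a : ℝ) (hv : 0 < v)
    (hvs : ∑ k ∈ s, (c k) ^ 2 ≤ v) (ha : 0 < a) :
    P {ω | a ≤ ∑ k ∈ s, c k * Z k ω} ≤ ENNReal.ofReal (Real.exp (-a ^ 2 / (2 * v))) := by
  classical
  set X : ℕ → Ω → ℝ := fun k ω => c k * Z k ω with hXdef
  have hXm : ∀ k, Measurable (X k) := fun k => (hZmeas k).const_mul (c k)
  have hXi : iIndepFun X P :=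
    hZindep.comp (fun k => (c k * ·)) (fun k => measurable_const_mul (c k))
  set t : ℝ := a / v with htdef
  have ht : 0 ≤ t := le_of_lt (div_pos ha hv)
  have hmgfX : ∀ k, mgf (X k) P t = Real.exp ((t * c k) ^ 2 / 2) := by
    intro k
    have h1 : mgf (X k) P t = mgf (Z k) P (t * c k) := by
      simp only [mgf, hXdef, ← mul_assoc]
    rw [h1, mgf_std_gaussian P (Z k) (hZmeas k) (hZlaw k)]
  have hint : ∀ k ∈ s, Integrable (fun ω => Real.exp (t * X k ω)) P := by
    intro k _
    have := integrable_exp_mul_std_gaussian P (Z k) (hZmeas k) (hZlaw k) (t * c k)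
    refine this.congr (Filter.Eventually.of_forall fun ω => ?_)
    simp only [hXdef, mul_assoc]
  have hsumint : Integrable (fun ω => Real.exp (t * (∑ i ∈ s, X i) ω)) P :=
    hXi.integrable_exp_mul_sum hXm hint
  have hch := measure_ge_le_exp_mul_mgf (μ := P) (X := ∑ i ∈ s, X i) a ht hsumint
  have hmgf : mgf (∑ i ∈ s, X i) P t = Real.exp (∑ k ∈ s, (t * c k) ^ 2 / 2) := by
    rw [hXi.mgf_sum hXm s, Real.exp_sum]
    exact Finset.prod_congr rfl fun k _ => hmgfX k
  rw [hmgf] at hch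
  have hbound : Real.exp (-t * a) * Real.exp (∑ k ∈ s, (t * c k) ^ 2 / 2)
      ≤ Real.exp (-a ^ 2 / (2 * v)) := by
    rw [← Real.exp_add]
    apply Real.exp_le_exp.mpr
    have h2 : ∑ k ∈ s, (t * c k) ^ 2 / 2 = t ^ 2 / 2 * ∑ k ∈ s, (c k) ^ 2 := by
      rw [Finset.mul_sum]; exact Finset.sum_congr rfl fun k _ => by ring
    rw [h2]
    have h3 : t ^ 2 / 2 * ∑ k ∈ s, (c k) ^ 2 ≤ t ^ 2 / 2 * v :=
      mul_le_mul_of_nonneg_left hvs (by positivity)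
    have h4 : -t * a + t ^ 2 / 2 * v = -a ^ 2 / (2 * v) := by
      rw [htdef]
      field_simp
      ring
    linarith
  have hset : {ω | a ≤ ∑ k ∈ s, c k * Z k ω} = {ω | a ≤ (∑ i ∈ s, X i) ω} := by
    ext ω; simp [hXdef, Finset.sum_apply]
  rw [hset]
  calc P {ω | a ≤ (∑ i ∈ s, X i) ω}
      = ENNReal.ofReal (P {ω | a ≤ (∑ i ∈ s, X i) ω}).toReal := by
        rw [ENNReal.ofReal_toReal (measure_ne_top _ _)]
    _ ≤ ENNReal.ofReal (Real.exp (-a ^ 2 / (2 * v))) :=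
        ENNReal.ofReal_le_ofReal (le_trans hch hbound)

lemma gauss_sum_tail_abs {Ω : Type*} [MeasurableSpace Ω] (P : Measure Ω) [IsProbabilityMeasure P]
    (Z : ℕ → Ω → ℝ) (hZmeas : ∀ k, Measurable (Z k))
    (hZindep : iIndepFun Z P)
    (hZlaw : ∀ k, P.map (Z k) = gaussianReal 0 1)
    (s : Finset ℕ) (c : ℕ → ℝ) (v a : ℝ) (hv : 0 < v)
    (hvs : ∑ k ∈ s, (c k) ^ 2 ≤ v) (ha : 0 < a) :
    P {ω | a ≤ |∑ k ∈ s, c k * Z k ω|} ≤ ENNReal.ofReal (2 * Real.exp (-a ^ 2 / (2 * v))) := by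
  have h1 := gauss_sum_tail P Z hZmeas hZindep hZlaw s c v a hv hvs ha
  have h2 := gauss_sum_tail P Z hZmeas hZindep hZlaw s (fun k => -c k) v a hv (by
    simpa using hvs) ha
  have hsub : {ω | a ≤ |∑ k ∈ s, c k * Z k ω|}
      ⊆ {ω | a ≤ ∑ k ∈ s, c k * Z k ω} ∪ {ω | a ≤ ∑ k ∈ s, (fun k => -c k) k * Z k ω} := by
    intro ω hω
    have hω' : a ≤ |∑ k ∈ s, c k * Z k ω| := hω
    rcases le_abs.mp hω' with h | h
    · exact Or.inl h
    · refine Or.inr ?_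
      simpa [Finset.sum_neg_distrib, neg_mul] using h
  calc P {ω | a ≤ |∑ k ∈ s, c k * Z k ω|} ≤ _ := measure_mono hsub
    _ ≤ _ + _ := measure_union_le _ _
    _ ≤ ENNReal.ofReal (Real.exp (-a ^ 2 / (2 * v))) + ENNReal.ofReal (Real.exp (-a ^ 2 / (2 * v))) :=
        add_le_add h1 h2
    _ = ENNReal.ofReal (2 * Real.exp (-a ^ 2 / (2 * v))) := by
        rw [← ENNReal.ofReal_add (by positivity) (by positivity)]
        ring_nf

lemma nat_two_pow_rpow (j : ℕ) (y : ℝ) : (((2:ℕ) ^ j : ℕ) : ℝ) ^ y = ((2:ℝ) ^ y) ^ j := by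
  push_cast
  rw [← Real.rpow_natCast (2:ℝ) j, ← Real.rpow_mul (by norm_num), mul_comm,
    Real.rpow_mul (by norm_num), Real.rpow_natCast]

lemma sum_sq_bound (H A : ℝ) (hH : 0 < H) (hA : 0 < A) (j N : ℕ) (hN : N < 2 ^ (j + 1))
    (c : ℕ → ℝ) (hc : ∀ k ∈ Finset.Ico (2 ^ j) (N + 1), |c k| ≤ A * (k : ℝ) ^ (-(H + 1 / 2))) :
    ∑ k ∈ Finset.Ico (2 ^ j) (N + 1), (c k) ^ 2 ≤ (A * ((2:ℝ) ^ (-H)) ^ j) ^ 2 := by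
  have hx0 : (0:ℝ) < ((2 ^ j : ℕ) : ℝ) := by positivity
  have hterm : ∀ k ∈ Finset.Ico (2 ^ j) (N + 1),
      (c k) ^ 2 ≤ A ^ 2 * ((2 ^ j : ℕ) : ℝ) ^ (-(2 * H + 1)) := by
    intro k hk
    have hk1 : (2:ℕ) ^ j ≤ k := (Finset.mem_Ico.mp hk).1
    have hkpos : (0:ℝ) < (k:ℝ) := by
      have h0 : 0 < k := lt_of_lt_of_le (Nat.pow_pos (by norm_num)) hk1
      exact_mod_cast h0
    have h2 : (c k) ^ 2 ≤ (A * (k : ℝ) ^ (-(H + 1 / 2))) ^ 2 := by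
      rw [← sq_abs]
      exact pow_le_pow_left₀ (abs_nonneg _) (hc k hk) 2
    refine h2.trans ?_
    rw [mul_pow]
    have h3 : ((k : ℝ) ^ (-(H + 1 / 2))) ^ 2 = (k : ℝ) ^ (-(2 * H + 1)) := by
      rw [← Real.rpow_natCast ((k : ℝ) ^ (-(H + 1 / 2))) 2, ← Real.rpow_mul hkpos.le]
      ring_nf
    rw [h3]
    refine mul_le_mul_of_nonneg_left ?_ (by positivity)
    refine Real.rpow_le_rpow_of_nonpos hx0 (by exact_mod_cast hk1) (by linarith)
  have hsum := Finset.sum_le_card_nsmul _ _ _ hterm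
  have hcard : (Finset.Ico (2 ^ j) (N + 1)).card ≤ 2 ^ j := by
    rw [Nat.card_Ico]; omega
  have hxx : ((2 ^ j : ℕ) : ℝ) * ((2 ^ j : ℕ) : ℝ) ^ (-(2 * H + 1))
      = ((2 ^ j : ℕ) : ℝ) ^ (-(2 * H)) := by
    nth_rewrite 1 [← Real.rpow_one (((2 ^ j : ℕ) : ℝ))]
    rw [← Real.rpow_add hx0]
    norm_num
  have hx2 : ((2 ^ j : ℕ) : ℝ) ^ (-(2 * H)) = ((2:ℝ) ^ (-(2 * H))) ^ j :=
    nat_two_pow_rpow j (-(2 * H))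
  have hr2 : ((2:ℝ) ^ (-H)) ^ (2:ℕ) = (2:ℝ) ^ (-(2 * H)) := by
    rw [← Real.rpow_natCast ((2:ℝ) ^ (-H)) 2, ← Real.rpow_mul (by norm_num : (0:ℝ) ≤ 2)]
    norm_num
    ring_nf
  calc ∑ k ∈ Finset.Ico (2 ^ j) (N + 1), (c k) ^ 2
      ≤ (Finset.Ico (2 ^ j) (N + 1)).card • (A ^ 2 * ((2 ^ j : ℕ) : ℝ) ^ (-(2 * H + 1))) := hsum
    _ = ((Finset.Ico (2 ^ j) (N + 1)).card : ℝ) * (A ^ 2 * ((2 ^ j : ℕ) : ℝ) ^ (-(2 * H + 1))) := by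
        rw [nsmul_eq_mul]
    _ ≤ ((2 ^ j : ℕ) : ℝ) * (A ^ 2 * ((2 ^ j : ℕ) : ℝ) ^ (-(2 * H + 1))) := by
        refine mul_le_mul_of_nonneg_right (by exact_mod_cast hcard) (by positivity)
    _ = A ^ 2 * (((2 ^ j : ℕ) : ℝ) * ((2 ^ j : ℕ) : ℝ) ^ (-(2 * H + 1))) := by ring
    _ = A ^ 2 * (((2:ℝ) ^ (-H)) ^ (2:ℕ)) ^ j := by rw [hxx, hx2, hr2]
    _ = (A * ((2:ℝ) ^ (-H)) ^ j) ^ 2 := by rw [← pow_right_comm]; ring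

lemma det_part (T H C M L : ℝ) (hT : 0 < T) (hH : 0 < H) (hC : 0 < C) (hM : 0 < M) (hL : 0 < L)
    (lam : ℕ → ℝ) (hlam : ∀ k : ℕ, 1 ≤ k → |lam k| ≤ C * (k : ℝ) ^ (-(H + 1 / 2)))
    (e : ℕ → ℝ → ℝ) (he_cont : ∀ k, Continuous (e k))
    (he_bdd : ∀ k x, |e k x| ≤ M)
    (he_lip : ∀ k x y, |e k x - e k y| ≤ L * |x - y|)
    (z : ℕ → ℝ)
    (hA : ∀ᶠ j : ℕ in atTop, ∀ N : ℕ, 2 ^ j ≤ N → N < 2 ^ (j + 1) → ∀ i : ℕ, i ≤ 8 ^ j →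
      |∑ k ∈ Finset.Ico (2 ^ j) (N + 1),
          lam k * e k (k * π * ((i : ℝ) * T / 8 ^ j) / T) * z k|
        ≤ 3 * C * M * ((j : ℝ) + 1) * ((2 : ℝ) ^ (-H)) ^ j)
    (hB : ∀ᶠ k : ℕ in atTop, |z k| ≤ Real.sqrt k) :
    ∃ f : ℝ → ℝ, ContinuousOn f (Set.Icc 0 T) ∧
      TendstoUniformlyOn
        (fun N t => ∑ k ∈ Finset.range (N + 1), lam k * e k (k * π * t / T) * z k)
        f atTop (Set.Icc 0 T) := by
  have hπ : (0:ℝ) < π := Real.pi_pos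
  set r : ℝ := (2:ℝ) ^ (-H) with hrdef
  have hr0 : 0 < r := Real.rpow_pos_of_pos two_pos _
  have hr1 : r < 1 := Real.rpow_lt_one_of_one_lt_of_neg one_lt_two (by linarith)
  set b : ℕ → ℝ := fun j => 3 * C * M * ((j : ℝ) + 1) * r ^ j + 2 * C * L * π * (1/2 : ℝ) ^ j
    with hbdef
  have hb0 : ∀ j, 0 ≤ b j := by
    intro j
    have h1 : (0:ℝ) < ((j : ℝ) + 1) := by positivity
    positivity
  set F : ℕ → ℝ → ℝ :=
    fun N t => ∑ k ∈ Finset.range (N + 1), lam k * e k (k * π * t / T) * z k with hFdef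
  obtain ⟨J1, hJ1⟩ := eventually_atTop.mp hA
  obtain ⟨K0, hK0⟩ := eventually_atTop.mp hB
  set J : ℕ := max J1 K0 with hJdef
  -- core block estimate
  have hD : ∀ j, J ≤ j → ∀ N, 2 ^ j ≤ N → N < 2 ^ (j + 1) → ∀ t ∈ Set.Icc 0 T,
      |∑ k ∈ Finset.Ico (2 ^ j) (N + 1), lam k * e k (k * π * t / T) * z k| ≤ b j := by
    intro j hj N hN1 hN2 t ht
    obtain ⟨ht0, htT⟩ := ht
    set i : ℕ := Nat.floor (t * 8 ^ j / T) with hidef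
    have harg0 : 0 ≤ t * 8 ^ j / T := by positivity
    have hi8 : i ≤ 8 ^ j := by
      have h1 : t * 8 ^ j / T ≤ ((8 ^ j : ℕ) : ℝ) := by
        push_cast
        rw [div_le_iff₀ hT]
        calc t * 8 ^ j ≤ T * 8 ^ j := by
              refine mul_le_mul_of_nonneg_right htT (by positivity)
          _ = (8:ℝ) ^ j * T := by ring
      calc i ≤ Nat.floor (((8 ^ j : ℕ) : ℝ)) := Nat.floor_le_floor h1
        _ = 8 ^ j := Nat.floor_natCast _
    set g : ℝ := (i : ℝ) * T / 8 ^ j with hgdef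
    have hg0 : 0 ≤ g := by positivity
    have hgt : g ≤ t := by
      rw [hgdef, div_le_iff₀ (by positivity : (0:ℝ) < (8:ℝ) ^ j)]
      have h2 := Nat.floor_le harg0
      rw [← hidef] at h2
      calc (i:ℝ) * T ≤ (t * 8 ^ j / T) * T := by
            refine mul_le_mul_of_nonneg_right h2 hT.le
        _ = t * 8 ^ j := by field_simp
    have htg : t - g ≤ T / 8 ^ j := by
      have h2 : t * 8 ^ j / T < (i : ℝ) + 1 := by
        have h3 := Nat.lt_floor_add_one (t * 8 ^ j / T)
        rw [← hidef] at h3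
        exact_mod_cast h3
      rw [div_lt_iff₀ hT] at h2
      rw [hgdef, sub_le_iff_le_add]
      rw [show T / (8:ℝ) ^ j + (i : ℝ) * T / 8 ^ j = ((i:ℝ) + 1) * T / 8 ^ j from by ring]
      rw [le_div_iff₀ (by positivity : (0:ℝ) < (8:ℝ) ^ j)]
      linarith
    have hJ1j : J1 ≤ j := le_trans (le_max_left _ _) hj
    have hK2 : K0 ≤ 2 ^ j :=
      le_trans (Nat.lt_two_pow_self (n := K0)).le
        (Nat.pow_le_pow_right (by norm_num) (le_trans (le_max_right _ _) hj))
    have hgrid := hJ1 j hJ1j N hN1 hN2 i hi8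
    rw [← hgdef] at hgrid
    have hdiff : |∑ k ∈ Finset.Ico (2^j) (N+1), lam k * e k (k*π*t/T) * z k
        - ∑ k ∈ Finset.Ico (2^j) (N+1), lam k * e k (k*π*g/T) * z k|
        ≤ 2*C*L*π*(1/2:ℝ)^j := by
      rw [← Finset.sum_sub_distrib]
      refine (Finset.abs_sum_le_sum_abs _ _).trans ?_
      have hterm : ∀ k ∈ Finset.Ico (2^j) (N+1),
          |lam k * e k (k*π*t/T) * z k - lam k * e k (k*π*g/T) * z k|
          ≤ 2*C*L*π*(1/4:ℝ)^j := by
        intro k hk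
        obtain ⟨hk1, hk2⟩ := Finset.mem_Ico.mp hk
        have hk2' : k < 2^(j+1) := by omega
        have hk0 : 1 ≤ k := le_trans Nat.one_le_two_pow hk1
        have hkR : (0:ℝ) < k := by exact_mod_cast Nat.lt_of_lt_of_le Nat.zero_lt_one hk0
        have hzk : |z k| ≤ Real.sqrt k := hK0 k (le_trans hK2 hk1)
        rw [show lam k * e k (k*π*t/T) * z k - lam k * e k (k*π*g/T) * z k
            = lam k * (e k (k*π*t/T) - e k (k*π*g/T)) * z k from by ring,
          abs_mul, abs_mul]
        have h1' : |lam k| ≤ C * (k:ℝ)^(-(1/2:ℝ)) := by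
          refine (hlam k hk0).trans ?_
          refine mul_le_mul_of_nonneg_left ?_ hC.le
          refine Real.rpow_le_rpow_of_exponent_le (by exact_mod_cast hk0) (by linarith)
        have htg0 : (0:ℝ) ≤ t - g := sub_nonneg.mpr hgt
        have hx0 : (0:ℝ) ≤ (k:ℝ)*π*(t-g)/T :=
          div_nonneg (mul_nonneg (mul_nonneg (Nat.cast_nonneg k) hπ.le) htg0) hT.le
        have h2 : |e k (k*π*t/T) - e k (k*π*g/T)| ≤ L * ((k:ℝ)*π*(t-g)/T) := by
          refine (he_lip k _ _).trans ?_
          rw [show ((k:ℝ)*π*t/T - (k:ℝ)*π*g/T : ℝ) = (k:ℝ)*π*(t-g)/T from by ring]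
          rw [abs_of_nonneg hx0]
        have h3 : |z k| ≤ (k:ℝ)^((1:ℝ)/2) := by
          rw [show ((1:ℝ)/2) = (1/2:ℝ) from rfl, ← Real.sqrt_eq_rpow]
          exact hzk
        have hc1 : (0:ℝ) ≤ C * (k:ℝ)^(-(1/2:ℝ)) :=
          mul_nonneg hC.le (Real.rpow_nonneg (Nat.cast_nonneg k) _)
        have hc2 : (0:ℝ) ≤ (C * (k:ℝ)^(-(1/2:ℝ))) * (L * ((k:ℝ)*π*(t-g)/T)) :=
          mul_nonneg hc1 (mul_nonneg hL.le hx0)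
        calc |lam k| * |e k (k*π*t/T) - e k (k*π*g/T)| * |z k|
            ≤ (C * (k:ℝ)^(-(1/2:ℝ))) * (L * ((k:ℝ)*π*(t-g)/T)) * ((k:ℝ)^((1:ℝ)/2)) := by
              exact mul_le_mul (mul_le_mul h1' h2 (abs_nonneg _) hc1)
                h3 (abs_nonneg _) hc2
          _ = C*L*π*((t-g)/T) * ((k:ℝ)^(-(1/2:ℝ)) * (k:ℝ)^((1:ℝ)/2)) * k := by ring
          _ = C*L*π*((t-g)/T) * k := by
              rw [← Real.rpow_add hkR]
              norm_num
          _ ≤ C*L*π*((T/8^j)/T) * ((2:ℝ)^(j+1)) := by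
              have hkle : (k:ℝ) ≤ (2:ℝ)^(j+1) := by exact_mod_cast hk2'.le
              have hst : (t-g)/T ≤ (T/8^j)/T := by gcongr
              refine mul_le_mul (mul_le_mul_of_nonneg_left hst (by positivity)) hkle
                hkR.le (by positivity)
          _ = 2*C*L*π*(1/4:ℝ)^j := by
              have h8 : (8:ℝ)^j = (4:ℝ)^j * (2:ℝ)^j := by rw [← mul_pow]; norm_num
              have h4 : ((1:ℝ)/4)^j = 1/(4:ℝ)^j := by rw [div_pow, one_pow]
              rw [h4, h8]
              field_simp
              ring
      refine (Finset.sum_le_card_nsmul _ _ _ hterm).trans ?_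
      have hcard : (Finset.Ico (2^j) (N+1)).card ≤ 2^j := by
        rw [Nat.card_Ico]; omega
      calc (Finset.Ico (2^j) (N+1)).card • (2*C*L*π*(1/4:ℝ)^j)
          = ((Finset.Ico (2^j) (N+1)).card : ℝ) * (2*C*L*π*(1/4:ℝ)^j) := by
            rw [nsmul_eq_mul]
        _ ≤ ((2:ℝ)^j) * (2*C*L*π*(1/4:ℝ)^j) := by
            refine mul_le_mul_of_nonneg_right ?_ (by positivity)
            exact_mod_cast hcard
        _ = 2*C*L*π*(1/2:ℝ)^j := by
            have h24 : (2:ℝ)^j * ((1:ℝ)/4)^j = ((1:ℝ)/2)^j := by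
              rw [← mul_pow]; norm_num
            calc ((2:ℝ)^j) * (2*C*L*π*(1/4:ℝ)^j) = 2*C*L*π*((2:ℝ)^j * (1/4:ℝ)^j) := by ring
              _ = 2*C*L*π*(1/2:ℝ)^j := by rw [h24]
    set St : ℝ := ∑ k ∈ Finset.Ico (2^j) (N+1), lam k * e k (k*π*t/T) * z k with hSt
    set Sg : ℝ := ∑ k ∈ Finset.Ico (2^j) (N+1), lam k * e k (k*π*g/T) * z k with hSg
    have h9 : Sg + (St - Sg) = St := by ring
    calc |St| = |Sg + (St - Sg)| := by rw [h9]
      _ ≤ |Sg| + |St - Sg| := abs_add_le _ _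
      _ ≤ 3 * C * M * ((j : ℝ) + 1) * r ^ j + 2*C*L*π*(1/2:ℝ)^j := add_le_add hgrid hdiff
      _ = b j := rfl
  
  -- telescoping over blocks
  have hblocks : ∀ d j0, J ≤ j0 → ∀ N, 2 ^ j0 ≤ N → N < 2 ^ (j0 + d + 1) → ∀ t ∈ Set.Icc 0 T,
      |∑ k ∈ Finset.Ico (2 ^ j0) (N + 1), lam k * e k (k * π * t / T) * z k|
        ≤ ∑ l ∈ Finset.Ico j0 (j0 + d + 1), b l := by
    intro d
    induction d with
    | zero =>
      intro j0 hj0 N h1 h2 t ht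
      rw [show j0 + 0 + 1 = j0 + 1 from rfl, Nat.Ico_succ_singleton, Finset.sum_singleton]
      exact hD j0 hj0 N h1 h2 t ht
    | succ d ih =>
      intro j0 hj0 N h1 h2 t ht
      by_cases hc : N < 2 ^ (j0 + d + 1)
      · refine (ih j0 hj0 N h1 hc t ht).trans ?_
        refine Finset.sum_le_sum_of_subset_of_nonneg ?_ (fun l _ _ => hb0 l)
        refine Finset.Ico_subset_Ico le_rfl (by omega)
      · push_neg at hc
        have hsplit : ∑ k ∈ Finset.Ico (2 ^ j0) (N + 1), lam k * e k (k * π * t / T) * z k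
            = (∑ k ∈ Finset.Ico (2 ^ j0) (2 ^ (j0 + d + 1)), lam k * e k (k * π * t / T) * z k)
              + ∑ k ∈ Finset.Ico (2 ^ (j0 + d + 1)) (N + 1),
                  lam k * e k (k * π * t / T) * z k := by
          rw [Finset.sum_Ico_consecutive]
          · exact Nat.pow_le_pow_right (by norm_num) (by omega)
          · omega
        have hfirst : |∑ k ∈ Finset.Ico (2 ^ j0) (2 ^ (j0 + d + 1)),
              lam k * e k (k * π * t / T) * z k| ≤ ∑ l ∈ Finset.Ico j0 (j0 + d + 1), b l := by
          have hN' : 2 ^ j0 ≤ 2 ^ (j0 + d + 1) - 1 := by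
            have := Nat.pow_lt_pow_right (a := 2) (by norm_num) (show j0 < j0 + d + 1 by omega)
            omega
          have hN'' : 2 ^ (j0 + d + 1) - 1 < 2 ^ (j0 + d + 1) := by
            have : 0 < 2 ^ (j0 + d + 1) := Nat.pow_pos (by norm_num)
            omega
          have := ih j0 hj0 (2 ^ (j0 + d + 1) - 1) hN' hN'' t ht
          rwa [Nat.sub_add_cancel Nat.one_le_two_pow] at this
        have hsecond : |∑ k ∈ Finset.Ico (2 ^ (j0 + d + 1)) (N + 1),
              lam k * e k (k * π * t / T) * z k| ≤ b (j0 + d + 1) := by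
          refine hD (j0 + d + 1) (by omega) N hc ?_ t ht
          rw [show j0 + (d + 1) + 1 = j0 + d + 1 + 1 from by omega] at h2
          exact h2
        rw [hsplit]
        calc |_ + _| ≤ _ + _ := abs_add_le _ _
          _ ≤ (∑ l ∈ Finset.Ico j0 (j0 + d + 1), b l) + b (j0 + d + 1) :=
              add_le_add hfirst hsecond
          _ = ∑ l ∈ Finset.Ico j0 (j0 + d + 1 + 1), b l :=
              (Finset.sum_Ico_succ_top (by omega) _).symm
          _ = ∑ l ∈ Finset.Ico j0 (j0 + (d + 1) + 1), b l := by
              rw [show j0 + (d + 1) + 1 = j0 + d + 1 + 1 from by omega]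
  -- summability of b
  have hbsum : Summable b := by
    have h1 : Summable (fun j : ℕ => ((j:ℝ) + 1) * r ^ j) := by
      have h2 := summable_pow_mul_geometric_of_norm_lt_one (R := ℝ) 1
        (r := r) (by rw [Real.norm_eq_abs, abs_of_pos hr0]; exact hr1)
      have h3 : Summable (fun j : ℕ => r ^ j) :=
        summable_geometric_of_lt_one hr0.le hr1
      have := h2.add h3
      refine this.congr fun j => ?_
      push_cast
      ring
    have h4 : Summable (fun j : ℕ => (1/2:ℝ) ^ j) :=
      summable_geometric_of_lt_one (by norm_num) (by norm_num)
    refine Summable.add ?_ (h4.mul_left (2*C*L*π))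
    refine (h1.mul_left (3*C*M)).congr fun j => ?_
    ring
  set Sb : ℝ := ∑' j, b j with hSbdef
  set Pb : ℕ → ℝ := fun n => ∑ l ∈ Finset.range n, b l with hPbdef
  have hPSb : Tendsto Pb atTop (nhds Sb) := hbsum.hasSum.tendsto_sum_nat
  have hPble : ∀ n, Pb n ≤ Sb := fun n => Summable.sum_le_tsum (Finset.range n) (fun l _ => hb0 l) hbsum
  have htailb : ∀ m n, m ≤ n → ∑ l ∈ Finset.Ico m n, b l ≤ Sb - Pb m := by
    intro m n hmn
    rw [Finset.sum_Ico_eq_sub _ hmn]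
    have := hPble n
    simp only [hPbdef]
    linarith [hPble n]
  -- distance to reference partial sum
  have hFG : ∀ j0, J ≤ j0 → ∀ N, 2 ^ j0 ≤ N → ∀ t ∈ Set.Icc 0 T,
      |F N t - F (2 ^ j0 - 1) t| ≤ Sb - Pb j0 := by
    intro j0 hj0 N hN t ht
    have hN0 : N ≠ 0 := by
      have : 0 < 2 ^ j0 := Nat.pow_pos (by norm_num)
      omega
    set j : ℕ := Nat.log 2 N with hjd
    have hjN : 2 ^ j ≤ N := Nat.pow_log_le_self 2 hN0
    have hNj : N < 2 ^ (j + 1) := Nat.lt_pow_succ_log_self (by norm_num) N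
    have hj0j : j0 ≤ j := by
      rw [hjd]
      exact (Nat.le_log_iff_pow_le (by norm_num) hN0).mpr hN
    have hdecomp : F N t - F (2 ^ j0 - 1) t
        = ∑ k ∈ Finset.Ico (2 ^ j0) (N + 1), lam k * e k (k * π * t / T) * z k := by
      have h5 : (2 ^ j0 - 1) + 1 = 2 ^ j0 := Nat.sub_add_cancel Nat.one_le_two_pow
      have h6 := Finset.sum_range_add_sum_Ico
        (fun k => lam k * e k (k * π * t / T) * z k) (show 2 ^ j0 ≤ N + 1 by omega)
      simp only [hFdef, h5]
      linarith [h6]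
    rw [hdecomp]
    have hd : N < 2 ^ (j0 + (j - j0) + 1) := by
      rw [show j0 + (j - j0) = j from by omega]
      exact hNj
    refine (hblocks (j - j0) j0 hj0 N hN hd t ht).trans ?_
    exact htailb j0 _ (by omega)
  -- uniform Cauchy
  have hcauchy : ∀ ε : ℝ, 0 < ε → ∃ N0 : ℕ, ∀ m ≥ N0, ∀ n ≥ N0, ∀ t ∈ Set.Icc 0 T,
      |F m t - F n t| < ε := by
    intro ε hε
    have h4 : ∀ᶠ j0 in atTop, Sb - Pb j0 < ε/4 := by
      have h5 : ∀ᶠ j0 in atTop, Sb - ε/4 < Pb j0 :=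
        hPSb.eventually (eventually_gt_nhds (by linarith))
      filter_upwards [h5] with j0 hj0
      linarith
    obtain ⟨j0, hj0e, hj0J⟩ := (h4.and (eventually_ge_atTop J)).exists
    refine ⟨2 ^ j0, fun m hm n hn t ht => ?_⟩
    have h6 := hFG j0 hj0J m hm t ht
    have h7 := hFG j0 hj0J n hn t ht
    have h8 : F m t - F n t = (F m t - F (2 ^ j0 - 1) t) - (F n t - F (2 ^ j0 - 1) t) := by
      ring
    rw [h8]
    calc |_ - _| ≤ |F m t - F (2 ^ j0 - 1) t| + |F n t - F (2 ^ j0 - 1) t| := abs_sub _ _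
      _ ≤ (Sb - Pb j0) + (Sb - Pb j0) := add_le_add h6 h7
      _ < ε := by linarith
  have hUC : UniformCauchySeqOn F atTop (Set.Icc 0 T) := by
    rw [Metric.uniformCauchySeqOn_iff]
    intro ε hε
    obtain ⟨N0, h⟩ := hcauchy ε hε
    exact ⟨N0, fun m hm n hn t ht => by rw [Real.dist_eq]; exact h m hm n hn t ht⟩
  have hCS : ∀ t ∈ Set.Icc 0 T, CauchySeq (fun N => F N t) := by
    intro t ht
    rw [Metric.cauchySeq_iff]
    intro ε hε
    obtain ⟨N0, h⟩ := hcauchy ε hε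
    exact ⟨N0, fun m hm n hn => by rw [Real.dist_eq]; exact h m hm n hn t ht⟩
  set f : ℝ → ℝ := fun t => limUnder atTop (fun N => F N t) with hfdef
  have hptw : ∀ t ∈ Set.Icc 0 T, Tendsto (fun N => F N t) atTop (nhds (f t)) :=
    fun t ht => (hCS t ht).tendsto_limUnder
  have hTU : TendstoUniformlyOn F f atTop (Set.Icc 0 T) :=
    hUC.tendstoUniformlyOn_of_tendsto hptw
  have hcontF : ∀ N, ContinuousOn (F N) (Set.Icc 0 T) := by
    intro N
    refine Continuous.continuousOn ?_
    refine continuous_finset_sum _ fun k _ => ?_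
    exact (continuous_const.mul ((he_cont k).comp
      ((continuous_const.mul continuous_id).div_const T))).mul continuous_const
  exact ⟨f, hTU.continuousOn (Filter.Eventually.of_forall hcontF).frequently, hTU⟩

theorem series_converges_uniformly_as
    {Ω : Type*} [MeasurableSpace Ω] (P : Measure Ω) [IsProbabilityMeasure P]
    (T H C M L : ℝ) (hT : 0 < T) (hH : 0 < H) (hC : 0 < C) (hM : 0 < M) (hL : 0 < L)
    (lam : ℕ → ℝ) (hlam : ∀ k : ℕ, 1 ≤ k → |lam k| ≤ C * (k : ℝ) ^ (-(H + 1 / 2)))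
    (e : ℕ → ℝ → ℝ) (he_cont : ∀ k, Continuous (e k))
    (he_bdd : ∀ k x, |e k x| ≤ M)
    (he_lip : ∀ k x y, |e k x - e k y| ≤ L * |x - y|)
    (Z : ℕ → Ω → ℝ) (hZmeas : ∀ k, Measurable (Z k))
    (hZindep : iIndepFun Z P)
    (hZlaw : ∀ k, P.map (Z k) = gaussianReal 0 1) :
    ∀ᵐ ω ∂P, ∃ f : ℝ → ℝ, ContinuousOn f (Set.Icc 0 T) ∧
      TendstoUniformlyOn
        (fun N t => ∑ k ∈ Finset.range (N + 1), lam k * e k (k * π * t / T) * Z k ω)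
        f atTop (Set.Icc 0 T) := by
  have hπ : (0:ℝ) < π := Real.pi_pos
  set r : ℝ := (2:ℝ) ^ (-H) with hrdef
  have hr0 : 0 < r := Real.rpow_pos_of_pos two_pos _
  set aj : ℕ → ℝ := fun j => 3 * C * M * ((j : ℝ) + 1) * r ^ j with hajdef
  have haj0 : ∀ j, 0 < aj j := by
    intro j
    have h1 : (0:ℝ) < (j:ℝ) + 1 := by positivity
    positivity
  set Eset : ℕ → Set Ω := fun j =>
    ⋃ N ∈ Finset.Ico (2 ^ j) (2 ^ (j + 1)), ⋃ i ∈ Finset.range (8 ^ j + 1),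
      {ω | aj j ≤ |∑ k ∈ Finset.Ico (2 ^ j) (N + 1),
          lam k * e k (k * π * ((i : ℝ) * T / 8 ^ j) / T) * Z k ω|} with hEdef
  -- single event bound
  have hsingle : ∀ j : ℕ, ∀ N ∈ Finset.Ico (2 ^ j) (2 ^ (j + 1)), ∀ i ∈ Finset.range (8 ^ j + 1),
      P {ω | aj j ≤ |∑ k ∈ Finset.Ico (2 ^ j) (N + 1),
          lam k * e k (k * π * ((i : ℝ) * T / 8 ^ j) / T) * Z k ω|}
        ≤ ENNReal.ofReal (2 * Real.exp (-(9/2) * ((j:ℝ)+1)^2)) := by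
    intro j N hN i _
    obtain ⟨hN1, hN2⟩ := Finset.mem_Ico.mp hN
    set c : ℕ → ℝ := fun k => lam k * e k (k * π * ((i : ℝ) * T / 8 ^ j) / T) with hcdef
    have hvc : ∑ k ∈ Finset.Ico (2 ^ j) (N + 1), (c k) ^ 2 ≤ (C * M * r ^ j) ^ 2 := by
      have h1 : (C * M * r ^ j) ^ 2 = ((C * M) * ((2:ℝ) ^ (-H)) ^ j) ^ 2 := by
        rw [hrdef]
      rw [h1]
      refine sum_sq_bound H (C * M) hH (by positivity) j N hN2 c ?_
      intro k hk
      have hk1 : 1 ≤ k := le_trans Nat.one_le_two_pow (Finset.mem_Ico.mp hk).1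
      rw [hcdef, abs_mul]
      calc |lam k| * |e k (k * π * ((i : ℝ) * T / 8 ^ j) / T)|
          ≤ (C * (k : ℝ) ^ (-(H + 1 / 2))) * M :=
            mul_le_mul (hlam k hk1) (he_bdd k _) (abs_nonneg _)
              (mul_nonneg hC.le (Real.rpow_nonneg (Nat.cast_nonneg k) _))
        _ = C * M * (k : ℝ) ^ (-(H + 1 / 2)) := by ring
    have hvpos : (0:ℝ) < (C * M * r ^ j) ^ 2 := by positivity
    have := gauss_sum_tail_abs P Z hZmeas hZindep hZlaw (Finset.Ico (2 ^ j) (N + 1)) c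
      ((C * M * r ^ j) ^ 2) (aj j) hvpos hvc (haj0 j)
    have hexp : -(aj j) ^ 2 / (2 * (C * M * r ^ j) ^ 2) = -(9/2) * ((j:ℝ)+1)^2 := by
      rw [div_eq_iff (by positivity : (2 * (C * M * r ^ j) ^ 2 : ℝ) ≠ 0), hajdef]
      ring
    rw [hexp] at this
    exact this
  have hEbound : ∀ j : ℕ, P (Eset j)
      ≤ ENNReal.ofReal ((16:ℝ)^j * 4 * Real.exp (-(9/2) * ((j:ℝ)+1)^2)) := by
    intro j
    set q : ℝ≥0∞ := ENNReal.ofReal (2 * Real.exp (-(9/2) * ((j:ℝ)+1)^2)) with hqdef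
    have h1 : P (Eset j) ≤ (Finset.Ico (2 ^ j) (2 ^ (j + 1))).card •
        ((Finset.range (8 ^ j + 1)).card • q) := by
      rw [hEdef]
      refine le_trans (measure_biUnion_finset_le _ _) ?_
      refine le_trans (Finset.sum_le_card_nsmul _ _ _ ?_) le_rfl
      intro N hN
      refine le_trans (measure_biUnion_finset_le _ _) ?_
      refine Finset.sum_le_card_nsmul _ _ _ ?_
      intro i hi
      exact hsingle j N hN i hi
    have hcard1 : (Finset.Ico (2 ^ j) (2 ^ (j + 1))).card = 2 ^ j := by
      rw [Nat.card_Ico, pow_succ]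
      omega
    have hcard2 : (Finset.range (8 ^ j + 1)).card = 8 ^ j + 1 := Finset.card_range _
    rw [hcard1, hcard2] at h1
    refine h1.trans ?_
    rw [nsmul_eq_mul, nsmul_eq_mul, ← mul_assoc, ← Nat.cast_mul, hqdef,
      ← ENNReal.ofReal_natCast, ← ENNReal.ofReal_mul (by positivity)]
    refine ENNReal.ofReal_le_ofReal ?_
    have hE0 : (0:ℝ) < Real.exp (-(9/2) * ((j:ℝ)+1)^2) := Real.exp_pos _
    have h2 : ((2 ^ j * (8 ^ j + 1) : ℕ) : ℝ) * 2 ≤ (16:ℝ)^j * 4 := by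
      push_cast
      have h3 : (2:ℝ)^j ≤ (16:ℝ)^j := pow_le_pow_left₀ (by norm_num) (by norm_num) j
      have h4 : (2:ℝ)^j * (8:ℝ)^j = (16:ℝ)^j := by rw [← mul_pow]; norm_num
      nlinarith [pow_pos (show (0:ℝ) < 2 by norm_num) j, pow_pos (show (0:ℝ) < 8 by norm_num) j]
    calc ((2 ^ j * (8 ^ j + 1) : ℕ) : ℝ) * (2 * Real.exp (-(9/2) * ((j:ℝ)+1)^2))
        = (((2 ^ j * (8 ^ j + 1) : ℕ) : ℝ) * 2) * Real.exp (-(9/2) * ((j:ℝ)+1)^2) := by ring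
      _ ≤ ((16:ℝ)^j * 4) * Real.exp (-(9/2) * ((j:ℝ)+1)^2) :=
          mul_le_mul_of_nonneg_right h2 hE0.le
      _ = (16:ℝ)^j * 4 * Real.exp (-(9/2) * ((j:ℝ)+1)^2) := by ring
  -- summability of the E bounds
  have hexp16 : ∀ j : ℕ, (16:ℝ)^j * 4 * Real.exp (-(9/2) * ((j:ℝ)+1)^2)
      ≤ 4 * (Real.exp (-1))^j := by
    intro j
    have h16 : (16:ℝ)^j ≤ Real.exp (4 * j) := by
      have h1 : (16:ℝ) ≤ Real.exp 4 := by
        have h2 : (2:ℝ) ≤ Real.exp 1 := by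
          have := Real.add_one_le_exp 1
          linarith
        calc (16:ℝ) = 2^(4:ℕ) := by norm_num
          _ ≤ (Real.exp 1)^(4:ℕ) := pow_le_pow_left₀ (by norm_num) h2 4
          _ = Real.exp 4 := by
              rw [← Real.exp_nat_mul]
              norm_num
      calc (16:ℝ)^j ≤ (Real.exp 4)^j := pow_le_pow_left₀ (by norm_num) h1 j
        _ = Real.exp (4 * j) := by rw [← Real.exp_nat_mul, mul_comm]
    have h5 : Real.exp (4 * j) * Real.exp (-(9/2) * ((j:ℝ)+1)^2) ≤ Real.exp (-(j:ℝ)) := by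
      rw [← Real.exp_add]
      refine Real.exp_le_exp.mpr ?_
      have hj0 : (0:ℝ) ≤ (j:ℝ) := Nat.cast_nonneg j
      nlinarith
    calc (16:ℝ)^j * 4 * Real.exp (-(9/2) * ((j:ℝ)+1)^2)
        = 4 * ((16:ℝ)^j * Real.exp (-(9/2) * ((j:ℝ)+1)^2)) := by ring
      _ ≤ 4 * (Real.exp (4 * j) * Real.exp (-(9/2) * ((j:ℝ)+1)^2)) := by
          refine mul_le_mul_of_nonneg_left ?_ (by norm_num)
          exact mul_le_mul_of_nonneg_right h16 (Real.exp_pos _).le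
      _ ≤ 4 * Real.exp (-(j:ℝ)) := mul_le_mul_of_nonneg_left h5 (by norm_num)
      _ = 4 * (Real.exp (-1))^j := by
          rw [← Real.exp_nat_mul]
          norm_num
  have hgeo : Summable (fun j : ℕ => 4 * (Real.exp (-1:ℝ))^j) := by
    refine Summable.mul_left 4 ?_
    refine summable_geometric_of_lt_one (Real.exp_pos _).le ?_
    exact Real.exp_lt_one_iff.mpr (by norm_num)
  have hEsummable : Summable (fun j : ℕ => (16:ℝ)^j * 4 * Real.exp (-(9/2) * ((j:ℝ)+1)^2)) :=
    Summable.of_nonneg_of_le (fun j => by positivity) hexp16 hgeo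
  have hEtsum : (∑' j, P (Eset j)) ≠ ⊤ := by
    refine ne_top_of_le_ne_top ?_ (ENNReal.tsum_le_tsum hEbound)
    rw [← ENNReal.ofReal_tsum_of_nonneg (fun j => by positivity) hEsummable]
    exact ENNReal.ofReal_ne_top
  have hBC1 : ∀ᵐ ω ∂P, ∀ᶠ j in atTop, ω ∉ Eset j := ae_eventually_notMem hEtsum
  -- G events
  set Gset : ℕ → Set Ω := fun k => {ω | Real.sqrt ((k:ℝ)+1) ≤ |Z (k+1) ω|} with hGdef
  have hGbound : ∀ k : ℕ, P (Gset k) ≤ ENNReal.ofReal (2 * Real.exp (-((k:ℝ)+1)/2)) := by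
    intro k
    have hs : (0:ℝ) < Real.sqrt ((k:ℝ)+1) := Real.sqrt_pos.mpr (by positivity)
    have := gauss_sum_tail_abs P Z hZmeas hZindep hZlaw {k+1} (fun _ => (1:ℝ)) 1
      (Real.sqrt ((k:ℝ)+1)) one_pos (by norm_num) hs
    have hset : {ω | Real.sqrt ((k:ℝ)+1) ≤ |∑ k' ∈ ({k+1} : Finset ℕ),
        (fun _ => (1:ℝ)) k' * Z k' ω|} = Gset k := by
      ext ω
      simp [hGdef]
    have hexp2 : -(Real.sqrt ((k:ℝ)+1)) ^ 2 / (2 * 1) = -((k:ℝ)+1)/2 := by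
      rw [Real.sq_sqrt (by positivity : (0:ℝ) ≤ (k:ℝ)+1)]
      ring
    rw [hset, hexp2] at this
    exact this
  have hGsummable : Summable (fun k : ℕ => 2 * Real.exp (-((k:ℝ)+1)/2)) := by
    have h1 : Summable (fun k : ℕ => 2 * (Real.exp (-1/2:ℝ))^k) := by
      refine Summable.mul_left 2 ?_
      refine summable_geometric_of_lt_one (Real.exp_pos _).le ?_
      exact Real.exp_lt_one_iff.mpr (by norm_num)
    refine Summable.of_nonneg_of_le (fun k => by positivity) (fun k => ?_) h1
    have h2 : Real.exp (-((k:ℝ)+1)/2) ≤ Real.exp (-(k:ℝ)/2) := by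
      refine Real.exp_le_exp.mpr (by linarith [Nat.cast_nonneg (α := ℝ) k])
    refine mul_le_mul_of_nonneg_left (h2.trans ?_) (by norm_num)
    rw [← Real.exp_nat_mul]
    refine le_of_eq (congrArg Real.exp ?_)
    push_cast
    ring
  have hGtsum : (∑' k, P (Gset k)) ≠ ⊤ := by
    refine ne_top_of_le_ne_top ?_ (ENNReal.tsum_le_tsum hGbound)
    rw [← ENNReal.ofReal_tsum_of_nonneg (fun k => by positivity) hGsummable]
    exact ENNReal.ofReal_ne_top
  have hBC2 : ∀ᵐ ω ∂P, ∀ᶠ k in atTop, ω ∉ Gset k := ae_eventually_notMem hGtsum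
  filter_upwards [hBC1, hBC2] with ω h1 h2
  have hA : ∀ᶠ j : ℕ in atTop, ∀ N : ℕ, 2 ^ j ≤ N → N < 2 ^ (j + 1) → ∀ i : ℕ, i ≤ 8 ^ j →
      |∑ k ∈ Finset.Ico (2 ^ j) (N + 1),
          lam k * e k (k * π * ((i : ℝ) * T / 8 ^ j) / T) * Z k ω|
        ≤ 3 * C * M * ((j : ℝ) + 1) * ((2 : ℝ) ^ (-H)) ^ j := by
    filter_upwards [h1] with j hj
    intro N hN1 hN2 i hi
    rw [hEdef] at hj
    simp only [Set.mem_iUnion, Set.mem_setOf_eq, not_exists] at hj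
    have := hj N (Finset.mem_Ico.mpr ⟨hN1, hN2⟩) i (Finset.mem_range.mpr (by omega))
    rw [← hrdef]
    exact (not_le.mp this).le
  have hB : ∀ᶠ k : ℕ in atTop, |Z k ω| ≤ Real.sqrt k := by
    rw [eventually_atTop]
    obtain ⟨K, hK⟩ := eventually_atTop.mp h2
    refine ⟨K + 1, fun m hm => ?_⟩
    have h3 := hK (m - 1) (by omega)
    rw [hGdef] at h3
    simp only [Set.mem_setOf_eq, not_le] at h3
    have h4 : (m - 1) + 1 = m := by omega
    have h5 : ((m - 1 : ℕ) : ℝ) + 1 = (m : ℝ) := by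
      have : 1 ≤ m := by omega
      push_cast [Nat.cast_sub this]
      ring
    rw [h4, h5] at h3
    exact h3.le
  exact det_part T H C M L hT hH hC hM hL lam hlam e he_cont he_bdd he_lip
    (fun k => Z k ω) hA hB
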